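/- Let (v_k) be a sequence of nonnegative reals satisfying v_{k+1} ≤ a₁ v_k + a₂ · max_{k−B ≤ ĵ ≤ k} v_ĵ for all k ≥ k₀ + B, where a₁, a₂ ≥ 0, a₁ + a₂ ≤ 1, 0 < a₁ + a₂, and set ρ = (a₁ + a₂)^{1/(B+1)}. If max_{k₀ ≤ ĵ ≤ k₀+B} v_ĵ ≤ V₀, then v_k ≤ ρ^{k − (k₀+B)} V₀ for all k ≥ k₀ + B. -/

import Mathlib

theorem stmt_1 (v : ℕ → ℝ) (a₁ a₂ V₀ ρ : ℝ) (B k₀ : ℕ)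
    (hv : ∀ k, 0 ≤ v k)
    (ha₁ : 0 ≤ a₁) (ha₂ : 0 ≤ a₂) (hsum : a₁ + a₂ ≤ 1) (hpos : 0 < a₁ + a₂)
    (hρ : ρ = (a₁ + a₂) ^ ((1 : ℝ) / (B + 1)))
    (hrec : ∀ k, k₀ + B ≤ k →
      v (k + 1) ≤ a₁ * v k +
        a₂ * (Finset.Icc (k - B) k).sup' (Finset.nonempty_Icc.mpr (Nat.sub_le k B)) v)
    (hinit : (Finset.Icc k₀ (k₀ + B)).sup'
        (Finset.nonempty_Icc.mpr (Nat.le_add_right k₀ B)) v ≤ V₀) :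
    ∀ k, k₀ + B ≤ k → v k ≤ ρ ^ (k - (k₀ + B)) * V₀ := by
  have hρpos : 0 < ρ := hρ ▸ Real.rpow_pos_of_pos hpos _
  have hρ1 : ρ ≤ 1 := by
    rw [hρ]
    exact Real.rpow_le_one hpos.le hsum (by positivity)
  have hV0 : 0 ≤ V₀ :=
    le_trans (hv k₀) (le_trans (Finset.le_sup' v (by simp)) hinit)
  have hρpow : ρ ^ (B + 1) = a₁ + a₂ := by
    rw [hρ, ← Real.rpow_natCast ((a₁ + a₂) ^ ((1 : ℝ) / (B + 1))) (B + 1),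
      ← Real.rpow_mul hpos.le, one_div, Nat.cast_add, Nat.cast_one,
      inv_mul_cancel₀ (by positivity), Real.rpow_one]
  have hmono : ∀ m n : ℕ, m ≤ n → ρ ^ n ≤ ρ ^ m := fun m n h =>
    pow_le_pow_of_le_one hρpos.le hρ1 h
  intro k
  induction k using Nat.strong_induction_on with
  | _ k ih =>
    intro hk
    rcases Nat.lt_or_ge k (k₀ + B + 1) with h | h
    · have hkeq : k = k₀ + B := le_antisymm (Nat.lt_succ_iff.mp h) hk
      subst hkeq
      simp only [Nat.sub_self, pow_zero, one_mul]
      exact le_trans (Finset.le_sup' v (by simp)) hinit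
    · obtain ⟨j, rfl⟩ : ∃ j, k = j + 1 := ⟨k - 1, by omega⟩
      have hj : k₀ + B ≤ j := by omega
      have hmax : (Finset.Icc (j - B) j).sup'
          (Finset.nonempty_Icc.mpr (Nat.sub_le j B)) v
          ≤ ρ ^ ((j - B) - (k₀ + B)) * V₀ := by
        apply Finset.sup'_le
        intro i hi
        simp only [Finset.mem_Icc] at hi
        rcases Nat.lt_or_ge i (k₀ + B) with hi2 | hi2
        · have he : (j - B) - (k₀ + B) = 0 := by omega
          rw [he, pow_zero, one_mul]
          exact le_trans
            (Finset.le_sup' v (Finset.mem_Icc.mpr ⟨by omega, by omega⟩)) hinit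
        · exact le_trans (ih i (by omega) hi2)
            (mul_le_mul_of_nonneg_right (hmono _ _ (by omega)) hV0)
      have hvj := ih j (by omega) hj
      calc v (j + 1)
          ≤ a₁ * v j + a₂ * (Finset.Icc (j - B) j).sup'
              (Finset.nonempty_Icc.mpr (Nat.sub_le j B)) v := hrec j hj
        _ ≤ a₁ * (ρ ^ (j - (k₀ + B)) * V₀)
              + a₂ * (ρ ^ ((j - B) - (k₀ + B)) * V₀) := by gcongr
        _ ≤ a₁ * (ρ ^ ((j - B) - (k₀ + B)) * V₀)
              + a₂ * (ρ ^ ((j - B) - (k₀ + B)) * V₀) :=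
            add_le_add_left (mul_le_mul_of_nonneg_left
              (mul_le_mul_of_nonneg_right (hmono _ _ (by omega)) hV0) ha₁) _
        _ = (a₁ + a₂) * (ρ ^ ((j - B) - (k₀ + B)) * V₀) := by ring
        _ = ρ ^ (B + 1 + ((j - B) - (k₀ + B))) * V₀ := by
            rw [pow_add, hρpow]; ring
        _ ≤ ρ ^ ((j + 1) - (k₀ + B)) * V₀ :=
            mul_le_mul_of_nonneg_right (hmono _ _ (by omega)) hV0
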